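/- A sparse graph (with two types of vertices) is 1.5-orientable. -/

import Mathlib

open SimpleGraph

variable {V : Type*}

/-- Number of type-1 vertices in a vertex set. -/
noncomputable def n1 (t1 : V → Prop) (S : Set V) : ℕ := {v ∈ S | t1 v}.ncard

/-- Number of type-2 vertices in a vertex set. -/
noncomputable def n2 (t1 : V → Prop) (S : Set V) : ℕ := {v ∈ S | ¬ t1 v}.ncard

/-- Number of edges of `G` with both endpoints in `S`. -/
noncomputable def edgesIn (G : SimpleGraph V) (S : Set V) : ℕ :=
  {e ∈ G.edgeSet | ∀ v ∈ e, v ∈ S}.ncard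

/-- Sparsity: every subgraph on `n' ≥ 2` vertices has at most
`n₁' + 2 n₂' + min 0 (n₁' - 3)` edges. -/
def Sparse (G : SimpleGraph V) (t1 : V → Prop) : Prop :=
  ∀ S : Set V, 2 ≤ S.ncard →
    (edgesIn G S : ℤ) ≤ (n1 t1 S : ℤ) + 2 * n2 t1 S + min 0 ((n1 t1 S : ℤ) - 3)

/-- Minimal rigidity: either one vertex, or sparse with exactly
`n₁ + 2 n₂ + min 0 (n₁ - 3)` edges. -/
def MinRigid (G : SimpleGraph V) (t1 : V → Prop) : Prop :=
  Nat.card V = 1 ∨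
    (Sparse G t1 ∧
      (G.edgeSet.ncard : ℤ) = (n1 t1 Set.univ : ℤ) + 2 * n2 t1 Set.univ +
        min 0 ((n1 t1 Set.univ : ℤ) - 3))

/-- Rigidity: contains a spanning minimally rigid subgraph. -/
def Rigid (G : SimpleGraph V) (t1 : V → Prop) : Prop :=
  ∃ H : SimpleGraph V, H ≤ G ∧ MinRigid H t1

/-- A rigid block: a vertex-induced rigid subgraph, identified with its vertex set. -/
def RigidBlock (G : SimpleGraph V) (t1 : V → Prop) (S : Set V) : Prop :=
  Rigid (G.induce S) (fun v => t1 ↑v)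

/-- 1.5-orientability: an orientation (choice of a head endpoint for each edge)
such that type-1 vertices have in-degree at most 1 and type-2 vertices have
in-degree at most 2. -/
def Orientable (G : SimpleGraph V) (t1 : V → Prop) : Prop :=
  ∃ f : G.edgeSet → V, (∀ e : G.edgeSet, f e ∈ (e : Sym2 V)) ∧
    ∀ v : V, (t1 v → {e : G.edgeSet | f e = v}.ncard ≤ 1) ∧
      {e : G.edgeSet | f e = v}.ncard ≤ 2

/-- A sparse graph is 1.5-orientable. -/
theorem stmt4' {V : Type*} [Fintype V] (G : SimpleGraph V) (t1 : V → Prop)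
    (hG : ∀ S : Set V, 2 ≤ S.ncard →
      (({e ∈ G.edgeSet | ∀ v ∈ e, v ∈ S}.ncard : ℤ) ≤ ({v ∈ S | t1 v}.ncard : ℤ)
        + 2 * {v ∈ S | ¬ t1 v}.ncard + min 0 (({v ∈ S | t1 v}.ncard : ℤ) - 3))) :
    ∃ f : G.edgeSet → V, (∀ e : G.edgeSet, f e ∈ (e : Sym2 V)) ∧
      ∀ v : V, (t1 v → {e : G.edgeSet | f e = v}.ncard ≤ 1) ∧
        {e : G.edgeSet | f e = v}.ncard ≤ 2 := by
  classical
  haveI : Fintype G.edgeSet := Fintype.ofFinite _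
  set cap : V → ℕ := fun v => if t1 v then 1 else 2 with hcapdef
  set slots : G.edgeSet → Finset (V × Fin 2) :=
    fun e => Finset.univ.filter (fun p => p.1 ∈ (e : Sym2 V) ∧ p.2.val < cap p.1) with hslots
  have hall : ∀ s : Finset G.edgeSet, s.card ≤ (s.biUnion slots).card := by
    intro s
    rcases s.eq_empty_or_nonempty with rfl | hne
    · simp
    set S : Finset V := s.biUnion (fun e => Finset.univ.filter (· ∈ (e : Sym2 V))) with hSdef
    have hmemS : ∀ v : V, v ∈ S ↔ ∃ e ∈ s, v ∈ (e : Sym2 V) := by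
      intro v; simp [hSdef]
    -- 2 ≤ |S|
    have hS2 : 2 ≤ (S : Set V).ncard := by
      obtain ⟨e0, he0⟩ := hne
      obtain ⟨a, b, hab⟩ : ∃ a b, (e0 : Sym2 V) = s(a, b) :=
        Sym2.ind (fun a b => ⟨a, b, rfl⟩) (e0 : Sym2 V)
      have hadj : G.Adj a b := by
        have := e0.2; rw [hab] at this; exact (G.mem_edgeSet).mp this
      have ha : a ∈ S := (hmemS a).mpr ⟨e0, he0, by rw [hab]; exact Sym2.mem_mk_left a b⟩
      have hb : b ∈ S := (hmemS b).mpr ⟨e0, he0, by rw [hab]; exact Sym2.mem_mk_right a b⟩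
      rw [Set.ncard_coe_finset]
      exact Finset.one_lt_card.mpr ⟨a, ha, b, hb, hadj.ne⟩
    -- edges bound
    have hcard : s.card ≤ {e ∈ G.edgeSet | ∀ v ∈ e, v ∈ (S : Set V)}.ncard := by
      have h1 : (s.image Subtype.val).card = s.card :=
        Finset.card_image_of_injective _ Subtype.val_injective
      rw [← h1, ← Set.ncard_coe_finset]
      refine Set.ncard_le_ncard ?_ (Set.toFinite _)
      intro x hx
      simp only [Finset.coe_image, Set.mem_image, Finset.mem_coe] at hx
      obtain ⟨e, hes, rfl⟩ := hx
      exact ⟨e.2, fun v hv => (hmemS v).mpr ⟨e, hes, hv⟩⟩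
    have hn1 : {v ∈ (S : Set V) | t1 v}.ncard = (S.filter (fun v => t1 v)).card := by
      rw [← Set.ncard_coe_finset]; congr 1; ext v; simp
    have hn2 : {v ∈ (S : Set V) | ¬ t1 v}.ncard = (S.filter (fun v => ¬ t1 v)).card := by
      rw [← Set.ncard_coe_finset]; congr 1; ext v; simp
    -- union of slots
    have hT : s.biUnion slots
        = Finset.univ.filter (fun p : V × Fin 2 => p.1 ∈ S ∧ p.2.val < cap p.1) := by
      ext p
      simp only [Finset.mem_biUnion, hslots, Finset.mem_filter, Finset.mem_univ, true_and,
        hmemS]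
      tauto
    have hTcard : (s.biUnion slots).card = ∑ v ∈ S, cap v := by
      rw [hT]
      rw [Finset.card_eq_sum_card_fiberwise (f := Prod.fst) (t := S)
        (fun p hp => (Finset.mem_filter.mp hp).2.1)]
      refine Finset.sum_congr rfl (fun v hv => ?_)
      have himg : (Finset.univ.filter
            (fun p : V × Fin 2 => p.1 ∈ S ∧ p.2.val < cap p.1)).filter (fun p => p.1 = v)
          = (Finset.univ.filter (fun i : Fin 2 => i.val < cap v)).image (fun i => (v, i)) := by
        ext p
        simp only [Finset.mem_filter, Finset.mem_univ, true_and, Finset.mem_image]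
        constructor
        · rintro ⟨⟨-, h2⟩, rfl⟩
          exact ⟨p.2, h2, rfl⟩
        · rintro ⟨i, hi, rfl⟩
          exact ⟨⟨hv, hi⟩, rfl⟩
      rw [himg, Finset.card_image_of_injective _ (fun a b h => by
        simpa using (Prod.mk.injEq v a v b).mp h |>.2)]
      by_cases hv1 : t1 v
      · simp only [hcapdef, hv1, if_true]; decide
      · simp only [hcapdef, hv1, if_false]; decide
    have hsum : ∑ v ∈ S, cap v
        = (S.filter (fun v => t1 v)).card + 2 * (S.filter (fun v => ¬ t1 v)).card := by
      rw [hcapdef]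
      rw [Finset.sum_ite (f := fun _ => 1) (g := fun _ => 2)]
      simp [Finset.sum_const, mul_comm]
    have hsparse := hG (S : Set V) hS2
    have hmin : min 0 (({v ∈ (S : Set V) | t1 v}.ncard : ℤ) - 3) ≤ 0 := min_le_left _ _
    have : (s.card : ℤ) ≤ ({v ∈ (S : Set V) | t1 v}.ncard : ℤ)
        + 2 * {v ∈ (S : Set V) | ¬ t1 v}.ncard := by
      have := Int.ofNat_le.mpr hcard
      omega
    rw [hTcard, hsum]
    rw [hn1, hn2] at this
    omega
  obtain ⟨f, hfinj, hfmem⟩ :=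
    (Finset.all_card_le_biUnion_card_iff_exists_injective slots).mp hall
  have hfmem' : ∀ e : G.edgeSet, (f e).1 ∈ (e : Sym2 V) ∧ (f e).2.val < cap (f e).1 := by
    intro e
    have := hfmem e
    simpa [hslots] using this
  refine ⟨fun e => (f e).1, fun e => (hfmem' e).1, fun v => ?_⟩
  have main : {e : G.edgeSet | (f e).1 = v}.ncard ≤ cap v := by
    have hinj : Function.Injective (fun i : Fin 2 => (v, i)) := by
      intro a b h; simpa using h
    have step : {e : G.edgeSet | (f e).1 = v}.ncard
        ≤ ((fun i : Fin 2 => (v, i)) '' {i | i.val < cap v}).ncard := by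
      refine Set.ncard_le_ncard_of_injOn f ?_ hfinj.injOn (Set.toFinite _)
      intro e he
      have h2 := (hfmem' e).2
      refine ⟨(f e).2, ?_, ?_⟩
      · simp only [Set.mem_setOf_eq]; rw [he] at h2; exact h2
      · simp only [Set.mem_setOf_eq] at he; rw [← he]
    rw [Set.ncard_image_of_injective _ hinj] at step
    refine step.trans ?_
    by_cases hv1 : t1 v
    · have : {i : Fin 2 | i.val < cap v} ⊆ {(0 : Fin 2)} := by
        intro i hi
        simp only [Set.mem_setOf_eq, hcapdef, hv1, if_true] at hi
        rw [Set.mem_singleton_iff]; ext; simp only [Fin.val_zero]; omega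
      calc {i : Fin 2 | i.val < cap v}.ncard ≤ ({(0 : Fin 2)} : Set (Fin 2)).ncard :=
            Set.ncard_le_ncard this (Set.toFinite _)
        _ = 1 := Set.ncard_singleton _
        _ ≤ cap v := by simp [hcapdef, hv1]
    · calc {i : Fin 2 | i.val < cap v}.ncard ≤ (Set.univ : Set (Fin 2)).ncard :=
            Set.ncard_le_ncard (Set.subset_univ _) (Set.toFinite _)
        _ = 2 := by rw [Set.ncard_univ]; simp
        _ ≤ cap v := by simp [hcapdef, hv1]
  constructor
  · intro hv
    exact main.trans (by simp [hcapdef, hv])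
  · refine main.trans ?_
    by_cases hv1 : t1 v <;> simp [hcapdef, hv1]

/-- A sparse graph is 1.5-orientable. -/
theorem stmt4 {V : Type*} [Fintype V] (G : SimpleGraph V) (t1 : V → Prop)
    (hG : Sparse G t1) : Orientable G t1 := stmt4' G t1 hG
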